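/- Let V ⊆ (ℤ/2)^{2n} be a subgroup generated by 2c symplectic-pair generators g₁,h₁,…,g_c,h_c and r isotropic generators, all independent and satisfying the standard commutation relations, where g₁ and h₁ both have odd weight and all other generators have even weight. Then the number of even-weight elements of V equals 2^{r-1}(4^c - 2^c) and the number of odd-weight elements equals 2^{r-1}(4^c + 2^c). -/
import Mathlib


open Finset

/-- An `n`-qubit Pauli operator modulo phase, identified with `(u, v) ∈ (ℤ/2)ⁿ × (ℤ/2)ⁿ`
(corresponding to `Z^u X^v`). -/
abbrev Pauli (n : ℕ) := (Fin n → ZMod 2) × (Fin n → ZMod 2)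

/-- The weight of a Pauli operator: the number of qubits on which it acts nontrivially. -/
def wtP {n : ℕ} (g : Pauli n) : ℕ :=
  (Finset.univ.filter fun i => g.1 i ≠ 0 ∨ g.2 i ≠ 0).card

/-- The symplectic inner product of two Pauli operators. -/
def sip {n : ℕ} (g h : Pauli n) : ZMod 2 :=
  ∑ i, (g.1 i * h.2 i + g.2 i * h.1 i)

namespace TypeIIIAux

/-- The quadratic character of `ZMod 2` with values in `ℤ`. -/
def χ (x : ZMod 2) : ℤ := if x = 0 then 1 else -1

lemma χ_add (x y : ZMod 2) : χ (x + y) = χ x * χ y := by revert x y; decide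

lemma χ_sum {ι : Type*} (s : Finset ι) (f : ι → ZMod 2) :
    χ (∑ i ∈ s, f i) = ∏ i ∈ s, χ (f i) := by
  induction s using Finset.cons_induction with
  | empty => simp [χ]
  | cons a s ha ih => rw [Finset.sum_cons, Finset.prod_cons, χ_add, ih]

/-- The weight in `ZMod 2`. -/
def wt2 {n : ℕ} (x : Pauli n) : ZMod 2 := (wtP x : ZMod 2)

lemma wt2_eq {n} (x : Pauli n) :
    wt2 x = ∑ i, (if x.1 i ≠ 0 ∨ x.2 i ≠ 0 then (1:ZMod 2) else 0) := by
  rw [wt2, wtP, Finset.card_filter]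
  push_cast
  rfl

lemma key4 : ∀ a b u v : ZMod 2,
    (if a + u ≠ 0 ∨ b + v ≠ 0 then (1:ZMod 2) else 0)
      = ((if a ≠ 0 ∨ b ≠ 0 then (1:ZMod 2) else 0) + (if u ≠ 0 ∨ v ≠ 0 then 1 else 0))
        + (a * v + b * u) := by decide

lemma wt2_add {n} (x y : Pauli n) : wt2 (x + y) = wt2 x + wt2 y + sip x y := by
  rw [wt2_eq, wt2_eq, wt2_eq, sip, ← Finset.sum_add_distrib, ← Finset.sum_add_distrib]
  refine Finset.sum_congr rfl fun i _ => ?_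
  have := key4 (x.1 i) (x.2 i) (y.1 i) (y.2 i)
  simpa using this

lemma sip_zero_right {n} (x : Pauli n) : sip x 0 = 0 := by simp [sip]
lemma sip_zero_left {n} (x : Pauli n) : sip 0 x = 0 := by simp [sip]

lemma sip_add_right {n} (x y z : Pauli n) : sip x (y + z) = sip x y + sip x z := by
  rw [sip, sip, sip, ← Finset.sum_add_distrib]
  refine Finset.sum_congr rfl fun i _ => ?_
  simp only [Prod.fst_add, Prod.snd_add, Pi.add_apply]
  ring

lemma sip_add_left {n} (x y z : Pauli n) : sip (x + y) z = sip x z + sip y z := by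
  rw [sip, sip, sip, ← Finset.sum_add_distrib]
  refine Finset.sum_congr rfl fun i _ => ?_
  simp only [Prod.fst_add, Prod.snd_add, Pi.add_apply]
  ring

lemma sip_smul_left {n} (a : ZMod 2) (x y : Pauli n) : sip (a • x) y = a * sip x y := by
  rw [sip, sip, Finset.mul_sum]
  refine Finset.sum_congr rfl fun i _ => ?_
  simp only [Prod.smul_fst, Prod.smul_snd, Pi.smul_apply, smul_eq_mul]
  ring

lemma sip_smul_right {n} (a : ZMod 2) (x y : Pauli n) : sip x (a • y) = a * sip x y := by
  rw [sip, sip, Finset.mul_sum]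
  refine Finset.sum_congr rfl fun i _ => ?_
  simp only [Prod.smul_fst, Prod.smul_snd, Pi.smul_apply, smul_eq_mul]
  ring

lemma sip_sum_right {n ι} (s : Finset ι) (x : Pauli n) (f : ι → Pauli n) :
    sip x (∑ i ∈ s, f i) = ∑ i ∈ s, sip x (f i) := by
  induction s using Finset.cons_induction with
  | empty => simp [sip_zero_right]
  | cons a s ha ih => rw [Finset.sum_cons, Finset.sum_cons, sip_add_right, ih]

lemma sip_sum_left {n ι} (s : Finset ι) (x : Pauli n) (f : ι → Pauli n) :
    sip (∑ i ∈ s, f i) x = ∑ i ∈ s, sip (f i) x := by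
  induction s using Finset.cons_induction with
  | empty => simp [sip_zero_left]
  | cons a s ha ih => rw [Finset.sum_cons, Finset.sum_cons, sip_add_left, ih]

lemma zmod2_cases (a : ZMod 2) : a = 0 ∨ a = 1 := by revert a; decide

lemma wt2_zero {n} : wt2 (0 : Pauli n) = 0 := by simp [wt2, wtP, Prod.fst_zero]

lemma wt2_smul {n} (a : ZMod 2) (x : Pauli n) : wt2 (a • x) = a * wt2 x := by
  rcases zmod2_cases a with rfl | rfl
  · simp [wt2_zero]
  · simp

lemma even_iff_wt2 {n} (x : Pauli n) : Even (wtP x) ↔ wt2 x = 0 := by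
  rw [wt2, ZMod.natCast_eq_zero_iff]
  exact ⟨fun ⟨k, hk⟩ => ⟨k, by omega⟩, fun hd => hd.elim fun k hk => ⟨k, by omega⟩⟩

lemma wt2_sum {n ι} (s : Finset ι) (f : ι → Pauli n)
    (hf : ∀ i ∈ s, ∀ j ∈ s, sip (f i) (f j) = 0) :
    wt2 (∑ i ∈ s, f i) = ∑ i ∈ s, wt2 (f i) := by
  induction s using Finset.cons_induction with
  | empty => simp [wt2_zero]
  | cons a s ha ih =>
    rw [Finset.sum_cons, wt2_add, sip_sum_right, Finset.sum_cons,
      ih (fun i hi j hj => hf i (Finset.mem_cons_of_mem hi) j (Finset.mem_cons_of_mem hj))]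
    have : ∑ i ∈ s, sip (f a) (f i) = 0 :=
      Finset.sum_eq_zero fun i hi => hf a (Finset.mem_cons_self a s) i (Finset.mem_cons_of_mem hi)
    rw [this, add_zero]

lemma char_sum (c r : ℕ) (hc : 1 ≤ c) :
    ∑ p : (Fin (c + r) → ZMod 2) × (Fin c → ZMod 2),
        χ (p.1 ⟨0, by omega⟩ + p.2 ⟨0, hc⟩ + ∑ j, p.1 (Fin.castAdd r j) * p.2 j)
      = -2 * 2 ^ (c + r - 1) := by
  set i0 : Fin (c + r) := ⟨0, by omega⟩
  set j0 : Fin c := ⟨0, hc⟩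
  have hW : ∀ (a : Fin (c + r) → ZMod 2) (b : Fin c → ZMod 2),
      a i0 + b j0 + ∑ j, a (Fin.castAdd r j) * b j
        = a i0 + ∑ j, (a (Fin.castAdd r j) * b j + if j = j0 then b j else 0) := by
    intro a b
    rw [Finset.sum_add_distrib, Finset.sum_ite_eq' Finset.univ j0 b]
    simp; ring
  rw [Fintype.sum_prod_type]
  have step1 : ∀ a : Fin (c + r) → ZMod 2,
      ∑ b : Fin c → ZMod 2,
        χ (a i0 + b j0 + ∑ j, a (Fin.castAdd r j) * b j)
      = χ (a i0) * ∏ j : Fin c,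
          (if j = j0 then 1 - χ (a (Fin.castAdd r j)) else 1 + χ (a (Fin.castAdd r j))) := by
    intro a
    have : ∀ b : Fin c → ZMod 2,
        χ (a i0 + b j0 + ∑ j, a (Fin.castAdd r j) * b j)
        = χ (a i0) * ∏ j : Fin c,
            χ (a (Fin.castAdd r j) * b j + if j = j0 then b j else 0) := by
      intro b; rw [hW, χ_add, χ_sum]
    rw [Finset.sum_congr rfl fun b _ => this b, ← Finset.mul_sum]
    congr 1
    rw [show (∑ b : Fin c → ZMod 2, ∏ j : Fin c,
          χ (a (Fin.castAdd r j) * b j + if j = j0 then b j else 0))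
        = ∏ j : Fin c, ∑ y : ZMod 2,
            χ (a (Fin.castAdd r j) * y + if j = j0 then y else 0) from by
      rw [Finset.prod_univ_sum]; simp]
    refine Finset.prod_congr rfl fun j _ => ?_
    have h0 : ∀ z : ZMod 2, (∑ y : ZMod 2, χ (z * y + y)) = 1 - χ z := by decide
    have h1 : ∀ z : ZMod 2, (∑ y : ZMod 2, χ (z * y)) = 1 + χ z := by decide
    by_cases hj : j = j0
    · simp only [hj, if_true, if_pos]
      exact h0 _
    · simp only [hj, if_false, if_neg hj, add_zero]
      exact h1 _
  rw [Finset.sum_congr rfl fun a _ => step1 a]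
  set K : Fin (c + r) → ZMod 2 → ℤ := fun i y =>
    (if i = i0 then χ y else 1) *
      (if h : (i : ℕ) < c then (if (⟨(i : ℕ), h⟩ : Fin c) = j0 then 1 - χ y else 1 + χ y)
        else 1) with hK
  have hfac : ∀ a : Fin (c + r) → ZMod 2,
      χ (a i0) * (∏ j : Fin c,
          (if j = j0 then 1 - χ (a (Fin.castAdd r j)) else 1 + χ (a (Fin.castAdd r j))))
        = ∏ i : Fin (c + r), K i (a i) := by
    intro a
    rw [hK]
    rw [Finset.prod_mul_distrib]
    congr 1
    · rw [Finset.prod_ite_eq' Finset.univ i0 (fun i => χ (a i))]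
      simp
    · rw [Fin.prod_univ_add (f := fun i : Fin (c + r) =>
        if h : (i : ℕ) < c then (if (⟨(i : ℕ), h⟩ : Fin c) = j0 then 1 - χ (a i) else 1 + χ (a i))
          else 1)]
      have h2 : (∏ i : Fin r, (if h : ((Fin.natAdd c i : Fin (c + r)) : ℕ) < c then
          (if (⟨((Fin.natAdd c i : Fin (c + r)) : ℕ), h⟩ : Fin c) = j0
            then 1 - χ (a (Fin.natAdd c i)) else 1 + χ (a (Fin.natAdd c i))) else 1)) = 1 := by
        refine Finset.prod_eq_one fun i _ => ?_
        rw [dif_neg]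
        simp [Fin.natAdd]
      rw [h2, mul_one]
      refine Finset.prod_congr rfl fun j _ => ?_
      have hlt : ((Fin.castAdd r j : Fin (c + r)) : ℕ) < c := by
        simpa using j.isLt
      rw [dif_pos hlt]
      have he : (⟨((Fin.castAdd r j : Fin (c + r)) : ℕ), hlt⟩ : Fin c) = j := Fin.ext (by simp)
      rw [he]
  rw [Finset.sum_congr rfl fun a _ => hfac a]
  rw [show (∑ a : Fin (c + r) → ZMod 2, ∏ i : Fin (c + r), K i (a i))
      = ∏ i : Fin (c + r), ∑ y : ZMod 2, K i y from by rw [Finset.prod_univ_sum]; simp]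
  have hKval : ∀ i : Fin (c + r), (∑ y : ZMod 2, K i y) = if i = i0 then -2 else 2 := by
    intro i
    by_cases hi : i = i0
    · subst hi
      have hlt : ((i0 : Fin (c + r)) : ℕ) < c := by simp [i0]; omega
      have hj0 : (⟨((i0 : Fin (c+r)) : ℕ), hlt⟩ : Fin c) = j0 := by
        apply Fin.ext; simp [i0, j0]
      rw [if_pos rfl, hK]
      simp only [if_pos rfl, dif_pos hlt, hj0, if_pos rfl]
      decide
    · rw [if_neg hi, hK]
      simp only [if_neg hi]
      by_cases hlt : (i : ℕ) < c
      · have hne : (⟨(i : ℕ), hlt⟩ : Fin c) ≠ j0 := by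
          intro hh
          apply hi
          apply Fin.ext
          simpa [j0, i0] using congrArg Fin.val hh
        simp only [dif_pos hlt, if_neg hne]
        decide
      · simp only [dif_neg hlt]
        decide
  rw [Finset.prod_congr rfl fun i _ => hKval i]
  rw [← Finset.mul_prod_erase Finset.univ _ (Finset.mem_univ i0), if_pos rfl]
  have : (∏ i ∈ Finset.univ.erase i0, (if i = i0 then (-2:ℤ) else 2)) = 2 ^ (c + r - 1) := by
    rw [Finset.prod_congr rfl fun i hi => if_neg (Finset.ne_of_mem_erase hi)]
    rw [Finset.prod_const, Finset.card_erase_of_mem (Finset.mem_univ i0)]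
    simp
  rw [this]

lemma count_both (c r : ℕ) (hc : 1 ≤ c) :
    2 * (Finset.univ.filter (fun p : (Fin (c + r) → ZMod 2) × (Fin c → ZMod 2) =>
        p.1 ⟨0, by omega⟩ + p.2 ⟨0, hc⟩ + ∑ j, p.1 (Fin.castAdd r j) * p.2 j = 0)).card
      = 2 ^ r * (4 ^ c - 2 ^ c) ∧
    2 * (Finset.univ.filter (fun p : (Fin (c + r) → ZMod 2) × (Fin c → ZMod 2) =>
        ¬ (p.1 ⟨0, by omega⟩ + p.2 ⟨0, hc⟩ + ∑ j, p.1 (Fin.castAdd r j) * p.2 j = 0))).card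
      = 2 ^ r * (4 ^ c + 2 ^ c) := by
  set W : (Fin (c + r) → ZMod 2) × (Fin c → ZMod 2) → ZMod 2 :=
    fun p => p.1 ⟨0, by omega⟩ + p.2 ⟨0, hc⟩ + ∑ j, p.1 (Fin.castAdd r j) * p.2 j with hWdef
  have hsum : ∑ p, χ (W p) = -2 * 2 ^ (c + r - 1) := char_sum c r hc
  have hcardD : (Fintype.card ((Fin (c + r) → ZMod 2) × (Fin c → ZMod 2)) : ℤ)
      = 2 ^ (c + r) * 2 ^ c := by
    simp [Fintype.card_fun]
  obtain ⟨m, rfl⟩ : ∃ m, c = m + 1 := ⟨c - 1, by omega⟩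
  have hexp : m + 1 + r - 1 = m + r := by omega
  have heven : (2 * (Finset.univ.filter fun p => W p = 0).card : ℤ)
      = 2 ^ (m + 1 + r) * 2 ^ (m + 1) + (-2 * 2 ^ (m + 1 + r - 1)) := by
    rw [← hsum, ← hcardD]
    have h2 : ∀ x : ZMod 2, (if x = 0 then (2:ℤ) else 0) = 1 + χ x := by decide
    calc (2 * (Finset.univ.filter fun p => W p = 0).card : ℤ)
        = ∑ p ∈ Finset.univ.filter fun p => W p = 0, (2:ℤ) := by
          rw [Finset.sum_const]; push_cast; ring
      _ = ∑ p, (if W p = 0 then (2:ℤ) else 0) := by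
          rw [Finset.sum_ite, Finset.sum_const, Finset.sum_const]; simp
      _ = ∑ p, ((1:ℤ) + χ (W p)) := Finset.sum_congr rfl fun p _ => h2 (W p)
      _ = (Fintype.card _ : ℤ) + ∑ p, χ (W p) := by
          rw [Finset.sum_add_distrib]; simp [Finset.card_univ]
  have hodd : (2 * (Finset.univ.filter fun p => ¬ (W p = 0)).card : ℤ)
      = 2 ^ (m + 1 + r) * 2 ^ (m + 1) - (-2 * 2 ^ (m + 1 + r - 1)) := by
    rw [← hsum, ← hcardD]
    have h2 : ∀ x : ZMod 2, (if ¬ (x = 0) then (2:ℤ) else 0) = 1 - χ x := by decide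
    calc (2 * (Finset.univ.filter fun p => ¬ (W p = 0)).card : ℤ)
        = ∑ p ∈ Finset.univ.filter fun p => ¬ (W p = 0), (2:ℤ) := by
          rw [Finset.sum_const]; push_cast; ring
      _ = ∑ p, (if ¬ (W p = 0) then (2:ℤ) else 0) := by
          rw [Finset.sum_ite, Finset.sum_const, Finset.sum_const]; simp
      _ = ∑ p, ((1:ℤ) - χ (W p)) := Finset.sum_congr rfl fun p _ => h2 (W p)
      _ = (Fintype.card _ : ℤ) - ∑ p, χ (W p) := by
          rw [Finset.sum_sub_distrib]; simp [Finset.card_univ]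
  rw [hexp] at heven hodd
  have hle : (2:ℕ) ^ (m + 1) ≤ 4 ^ (m + 1) := Nat.pow_le_pow_left (by norm_num) _
  constructor
  · have : ((2 * (Finset.univ.filter fun p => W p = 0).card : ℕ) : ℤ)
        = ((2 ^ r * (4 ^ (m + 1) - 2 ^ (m + 1)) : ℕ) : ℤ) := by
      push_cast [hle]
      rw [heven]
      rw [show (4:ℤ) = 2 ^ 2 by norm_num, ← pow_mul]
      ring
    exact_mod_cast this
  · have : ((2 * (Finset.univ.filter fun p => ¬ (W p = 0)).card : ℕ) : ℤ)
        = ((2 ^ r * (4 ^ (m + 1) + 2 ^ (m + 1)) : ℕ) : ℤ) := by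
      push_cast
      rw [hodd]
      rw [show (4:ℤ) = 2 ^ 2 by norm_num, ← pow_mul]
      ring
    exact_mod_cast this

end TypeIIIAux

open TypeIIIAux in
/-- Type III: one symplectic pair `g₁, h₁` both of odd weight, all other generators even.
The conclusions are stated multiplied by 2, so that `2^{r-1}(4^c ∓ 2^c)` makes sense
also for `r = 0`. -/
theorem typeIII_weight_count {n c r : ℕ} (hc : 1 ≤ c)
    (g : Fin (c + r) → Pauli n) (h : Fin c → Pauli n)
    (hgg : ∀ i j, sip (g i) (g j) = 0)
    (hhh : ∀ i j, sip (h i) (h j) = 0)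
    (hgh : ∀ (i : Fin (c + r)) (j : Fin c), sip (g i) (h j) = if (i : ℕ) = (j : ℕ) then 1 else 0)
    (hcard : Nat.card (AddSubgroup.closure (Set.range g ∪ Set.range h) : AddSubgroup (Pauli n))
      = 2 ^ (2 * c + r))
    (hg1 : ¬ Even (wtP (g ⟨0, by omega⟩)))
    (hh1 : ¬ Even (wtP (h ⟨0, hc⟩)))
    (hgeven : ∀ i : Fin (c + r), (i : ℕ) ≠ 0 → Even (wtP (g i)))
    (hheven : ∀ j : Fin c, (j : ℕ) ≠ 0 → Even (wtP (h j))) :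
    2 * {x | x ∈ AddSubgroup.closure (Set.range g ∪ Set.range h) ∧ Even (wtP x)}.ncard
        = 2 ^ r * (4 ^ c - 2 ^ c) ∧
    2 * {x | x ∈ AddSubgroup.closure (Set.range g ∪ Set.range h) ∧ ¬ Even (wtP x)}.ncard
        = 2 ^ r * (4 ^ c + 2 ^ c) := by
  classical
  set V : AddSubgroup (Pauli n) := AddSubgroup.closure (Set.range g ∪ Set.range h) with hV
  set i0 : Fin (c + r) := ⟨0, by omega⟩ with hi0
  set j0 : Fin c := ⟨0, hc⟩ with hj0
  set φ : (Fin (c + r) → ZMod 2) × (Fin c → ZMod 2) → Pauli n := fun p => (∑ i, p.1 i • g i) + (∑ j, p.2 j • h j) with hφ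
  have hφadd : ∀ p q : (Fin (c + r) → ZMod 2) × (Fin c → ZMod 2), φ (p + q) = φ p + φ q := by
    intro p q
    simp only [hφ, Prod.fst_add, Prod.snd_add, Pi.add_apply, add_smul,
      Finset.sum_add_distrib]
    abel
  set φ' : (Fin (c + r) → ZMod 2) × (Fin c → ZMod 2) →+ Pauli n := AddMonoidHom.mk' φ hφadd with hφ'
  -- range φ' = V
  have hsub1 : φ'.range ≤ V := by
    rintro x ⟨p, rfl⟩
    refine AddSubgroup.add_mem _ (AddSubgroup.sum_mem _ fun i _ => ?_)
      (AddSubgroup.sum_mem _ fun j _ => ?_)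
    · rcases zmod2_cases (p.1 i) with h0 | h1
      · rw [h0, zero_smul]; exact AddSubgroup.zero_mem _
      · rw [h1, one_smul]
        exact AddSubgroup.subset_closure (Set.mem_union_left _ ⟨i, rfl⟩)
    · rcases zmod2_cases (p.2 j) with h0 | h1
      · rw [h0, zero_smul]; exact AddSubgroup.zero_mem _
      · rw [h1, one_smul]
        exact AddSubgroup.subset_closure (Set.mem_union_right _ ⟨j, rfl⟩)
  have hsub2 : V ≤ φ'.range := by
    rw [hV]
    rw [AddSubgroup.closure_le]
    rintro x (⟨i, rfl⟩ | ⟨j, rfl⟩)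
    · refine ⟨(Pi.single i 1, 0), ?_⟩
      show φ (Pi.single i 1, 0) = g i
      simp [hφ, Pi.single_apply, ite_smul, Finset.sum_ite_eq']
    · refine ⟨(0, Pi.single j 1), ?_⟩
      show φ (0, Pi.single j 1) = h j
      simp [hφ, Pi.single_apply, ite_smul, Finset.sum_ite_eq']
  have hVr : V = φ'.range := le_antisymm hsub2 hsub1
  -- injectivity of φ
  haveI : Fintype ↥V := Fintype.ofFinite _
  have hmem : ∀ p : (Fin (c + r) → ZMod 2) × (Fin c → ZMod 2), φ p ∈ V := fun p => hVr ▸ ⟨p, rfl⟩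
  set ψ : (Fin (c + r) → ZMod 2) × (Fin c → ZMod 2) → ↥V := fun p => ⟨φ p, hmem p⟩ with hψ
  have hsurj : Function.Surjective ψ := by
    rintro ⟨x, hx⟩
    rw [hVr] at hx
    obtain ⟨p, rfl⟩ := hx
    exact ⟨p, rfl⟩
  have hcards : Fintype.card ((Fin (c + r) → ZMod 2) × (Fin c → ZMod 2)) = Fintype.card ↥V := by
    rw [← Nat.card_eq_fintype_card, ← Nat.card_eq_fintype_card, hcard]
    rw [Nat.card_eq_fintype_card, Fintype.card_prod, Fintype.card_fun, Fintype.card_fun]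
    simp only [ZMod.card, Fintype.card_fin]
    rw [← pow_add]
    congr 1
    omega
  have hbij : Function.Bijective ψ :=
    (Fintype.bijective_iff_surjective_and_card ψ).mpr ⟨hsurj, hcards⟩
  have hinj : Function.Injective φ := fun p q hpq => hbij.1 (Subtype.ext hpq)
  -- parity formula
  set Wf : (Fin (c + r) → ZMod 2) × (Fin c → ZMod 2) → ZMod 2 :=
    fun p => p.1 i0 + p.2 j0 + ∑ j, p.1 (Fin.castAdd r j) * p.2 j with hWf
  have hwg : ∀ i, wt2 (g i) = if i = i0 then 1 else 0 := by
    intro i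
    by_cases hi : i = i0
    · subst hi
      rw [if_pos rfl]
      have : ¬ wt2 (g i0) = 0 := fun hz => hg1 ((even_iff_wt2 _).mpr hz)
      rcases zmod2_cases (wt2 (g i0)) with h0 | h1
      · exact absurd h0 this
      · exact h1
    · rw [if_neg hi, ← (even_iff_wt2 _).mp]
      exact hgeven i fun hz => hi (Fin.ext (by simp [hi0, hz]))
  have hwh : ∀ j, wt2 (h j) = if j = j0 then 1 else 0 := by
    intro j
    by_cases hj : j = j0
    · subst hj
      rw [if_pos rfl]
      have : ¬ wt2 (h j0) = 0 := fun hz => hh1 ((even_iff_wt2 _).mpr hz)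
      rcases zmod2_cases (wt2 (h j0)) with h0 | h1
      · exact absurd h0 this
      · exact h1
    · rw [if_neg hj, ← (even_iff_wt2 _).mp]
      exact hheven j fun hz => hj (Fin.ext (by simp [hj0, hz]))
  have hparity : ∀ p : (Fin (c + r) → ZMod 2) × (Fin c → ZMod 2), wt2 (φ p) = Wf p := by
    intro p
    have hA : wt2 (∑ i, p.1 i • g i) = p.1 i0 := by
      rw [wt2_sum _ _ (fun i _ j _ => by
        rw [sip_smul_left, sip_smul_right, hgg i j, mul_zero, mul_zero])]
      rw [Finset.sum_congr rfl fun i _ => by rw [wt2_smul, hwg i]]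
      simp [Finset.sum_ite_eq', mul_ite]
    have hB : wt2 (∑ j, p.2 j • h j) = p.2 j0 := by
      rw [wt2_sum _ _ (fun i _ j _ => by
        rw [sip_smul_left, sip_smul_right, hhh i j, mul_zero, mul_zero])]
      rw [Finset.sum_congr rfl fun j _ => by rw [wt2_smul, hwh j]]
      simp [Finset.sum_ite_eq', mul_ite]
    have hAB : sip (∑ i, p.1 i • g i) (∑ j, p.2 j • h j)
        = ∑ j, p.1 (Fin.castAdd r j) * p.2 j := by
      rw [sip_sum_left]
      have hrow : ∀ i, sip (p.1 i • g i) (∑ j, p.2 j • h j)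
          = ∑ j : Fin c, p.1 i * (p.2 j * (if (i : ℕ) = (j : ℕ) then 1 else 0)) := by
        intro i
        rw [sip_smul_left, sip_sum_right, Finset.mul_sum]
        refine Finset.sum_congr rfl fun j _ => ?_
        rw [sip_smul_right, hgh i j]
      rw [Finset.sum_congr rfl fun i _ => hrow i, Finset.sum_comm]
      refine Finset.sum_congr rfl fun j _ => ?_
      rw [Finset.sum_eq_single (Fin.castAdd r j)]
      · simp
      · intro b _ hb
        rw [if_neg, mul_zero, mul_zero]
        intro hbv
        exact hb (Fin.ext (by simpa using hbv))
      · intro habs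
        exact absurd (Finset.mem_univ _) habs
    rw [hφ]
    show wt2 ((∑ i, p.1 i • g i) + (∑ j, p.2 j • h j)) = Wf p
    rw [wt2_add, hA, hB, hAB]
  -- identify the sets with images under φ
  have himSet : ∀ P : Pauli n → Prop, {x | x ∈ V ∧ P x} = φ '' {p | P (φ p)} := by
    intro P
    ext x
    constructor
    · rintro ⟨hxV, hPx⟩
      rw [hVr] at hxV
      obtain ⟨p, rfl⟩ := hxV
      exact ⟨p, hPx, rfl⟩
    · rintro ⟨p, hPp, rfl⟩
      exact ⟨hmem p, hPp⟩
  have hncard : ∀ P : Pauli n → Prop, [DecidablePred P] →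
      {x | x ∈ V ∧ P x}.ncard = (Finset.univ.filter fun p : (Fin (c + r) → ZMod 2) × (Fin c → ZMod 2) => P (φ p)).card := by
    intro P _
    rw [himSet P, Set.ncard_image_of_injective _ hinj]
    rw [show {p : (Fin (c + r) → ZMod 2) × (Fin c → ZMod 2) | P (φ p)} = ↑(Finset.univ.filter fun p : (Fin (c + r) → ZMod 2) × (Fin c → ZMod 2) => P (φ p)) from by
      ext p; simp]
    exact Set.ncard_coe_finset _
  have heqfilter : ∀ p : (Fin (c + r) → ZMod 2) × (Fin c → ZMod 2), (Even (wtP (φ p)) ↔ Wf p = 0) := by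
    intro p
    rw [even_iff_wt2, hparity p]
  obtain ⟨hcount1, hcount2⟩ := count_both c r hc
  constructor
  · rw [hncard (fun x => Even (wtP x))]
    rw [show (Finset.univ.filter fun p : (Fin (c + r) → ZMod 2) × (Fin c → ZMod 2) => Even (wtP (φ p)))
        = Finset.univ.filter fun p : (Fin (c + r) → ZMod 2) × (Fin c → ZMod 2) => Wf p = 0 from
      Finset.filter_congr fun p _ => by rw [heqfilter p]]
    exact hcount1
  · rw [hncard (fun x => ¬ Even (wtP x))]
    rw [show (Finset.univ.filter fun p : (Fin (c + r) → ZMod 2) × (Fin c → ZMod 2) => ¬ Even (wtP (φ p)))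
        = Finset.univ.filter fun p : (Fin (c + r) → ZMod 2) × (Fin c → ZMod 2) => ¬ (Wf p = 0) from
      Finset.filter_congr fun p _ => by rw [heqfilter p]]
    exact hcount2
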